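/- Let G be a strongly connected directed graph on n vertices with self-loops, with m edges. View the m nonzero entries of A and the n entries of x as free variables. Then det H_n^{(r)}, the determinant of the n×n Hankel matrix with (a,b)-entry (A^{a+b-2} x)_r, is a nonzero polynomial in F[λ_1,…,λ_m,ξ_1,…,ξ_n] of total degree at most n², for any field F with at least n+1 elements. -/

import Mathlib

open Matrix

namespace HankelAux

variable {n : ℕ}

/-- can reach `r` from `v` in at most `k` steps -/
def StepsTo (E : Fin n → Fin n → Prop) (r : Fin n) : ℕ → Fin n → Prop
  | 0, v => v = r
  | k+1, v => v = r ∨ ∃ u, E v u ∧ StepsTo E r k u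

theorem exists_tree (E : Fin n → Fin n → Prop) (r : Fin n)
    (hconn : ∀ v, Relation.ReflTransGen E v r) :
    ∃ (parent : Fin n → Fin n) (d : Fin n → ℕ),
      (∀ v, d v = 0 ↔ v = r) ∧ (∀ v, v ≠ r → E v (parent v)) ∧
      (∀ v, v ≠ r → d (parent v) + 1 = d v) := by
  classical
  have hex : ∀ v, ∃ k, StepsTo E r k v := by
    intro v
    induction hconn v using Relation.ReflTransGen.head_induction_on with
    | refl => exact ⟨0, rfl⟩
    | head h _ ih =>
      obtain ⟨k, hk⟩ := ih
      exact ⟨k + 1, Or.inr ⟨_, h, hk⟩⟩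
  set d : Fin n → ℕ := fun v => Nat.find (hex v) with hd
  have hspec : ∀ v, StepsTo E r (d v) v := fun v => Nat.find_spec (hex v)
  have hd0 : ∀ v, d v = 0 ↔ v = r := by
    intro v
    constructor
    · intro h
      have := hspec v
      rwa [h] at this
    · rintro rfl
      exact Nat.eq_zero_of_le_zero (Nat.find_le (by exact rfl))
  have key : ∀ v, v ≠ r → ∃ u, E v u ∧ d u + 1 = d v := by
    intro v hv
    have hdv : d v ≠ 0 := fun h => hv ((hd0 v).1 h)
    obtain ⟨m, hm⟩ := Nat.exists_eq_succ_of_ne_zero hdv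
    have := hspec v
    rw [hm] at this
    rcases this with h | ⟨u, hE, hu⟩
    · exact absurd h hv
    · refine ⟨u, hE, le_antisymm ?_ ?_⟩
      · have hdu : d u ≤ m := Nat.find_le hu
        omega
      · have : StepsTo E r (d u + 1) v := Or.inr ⟨u, hE, hspec u⟩
        have : d v ≤ d u + 1 := Nat.find_le this
        omega
  have key' : ∀ v, ∃ u, v ≠ r → E v u ∧ d u + 1 = d v := by
    intro v
    by_cases hv : v = r
    · exact ⟨v, fun h => absurd hv h⟩
    · exact (key v hv).imp fun u hu => fun _ => hu
  choose parent hpar using key'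
  exact ⟨parent, d, hd0, fun v hv => (hpar v hv).1, fun v hv => (hpar v hv).2⟩

end HankelAux

namespace HankelAux

variable {n : ℕ} {K : Type*} [Field K]

/-- successive products of inverses -/
noncomputable def cf (f : ℕ → K) : ℕ → K
  | 0 => 1
  | k+1 => cf f k * (f (k+1))⁻¹

theorem exists_eigenmatrix (T : Fin n → K) (hT : Function.Injective T)
    (r : Fin n) (parent : Fin n → Fin n) (d : Fin n → ℕ)
    (hd0 : ∀ v, d v = 0 ↔ v = r)
    (hpar : ∀ v, v ≠ r → d (parent v) + 1 = d v) :
    ∃ P : Matrix (Fin n) (Fin n) K,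
      (Matrix.of fun u v => if u = v then T v else
          if v ≠ r ∧ parent v = u then (1:K) else 0) * P = P * Matrix.diagonal T ∧
      P.det = 1 ∧ (∀ i, P r i ≠ 0) := by
  classical
  have hanc : ∀ (i : Fin n) (k : ℕ), k ≤ d i → d (parent^[k] i) + k = d i := by
    intro i k
    induction k with
    | zero => simp
    | succ k ih =>
      intro hk
      have ihk := ih (by omega)
      have hw : parent^[k] i ≠ r := by
        intro h
        have := (hd0 (parent^[k] i)).2 h
        omega
      have := hpar _ hw
      rw [Function.iterate_succ_apply']
      omega
  have hanc_inj : ∀ (i : Fin n) (j k : ℕ), j ≤ d i → k ≤ d i →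
      parent^[j] i = parent^[k] i → j = k := by
    intro i j k hj hk h
    have h1 := hanc i j hj
    have h2 := hanc i k hk
    rw [h] at h1
    omega
  have hancr : ∀ i, parent^[d i] i = r := by
    intro i
    have := hanc i (d i) le_rfl
    exact (hd0 _).1 (by omega)
  set c : Fin n → ℕ → K := fun i => cf (fun j => T i - T (parent^[j] i)) with hc
  have hcsucc : ∀ i k, c i (k+1) = c i k * (T i - T (parent^[k+1] i))⁻¹ := fun i k => rfl
  have hTne : ∀ (i : Fin n) (k : ℕ), 1 ≤ k → k ≤ d i → T i - T (parent^[k] i) ≠ 0 := by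
    intro i k h1 h2
    rw [sub_ne_zero]
    intro h
    have := hanc i k h2
    rw [← hT h] at this
    omega
  have hcne : ∀ (i : Fin n) (k : ℕ), k ≤ d i → c i k ≠ 0 := by
    intro i k
    induction k with
    | zero => exact fun _ => one_ne_zero
    | succ k ih =>
      intro hk
      exact mul_ne_zero (ih (by omega)) (inv_ne_zero (hTne i (k+1) (by omega) hk))
  set P : Matrix (Fin n) (Fin n) K := Matrix.of fun v i =>
    if h : d v ≤ d i ∧ parent^[d i - d v] i = v then c i (d i - d v) else 0 with hP
  have hPapp : ∀ v i, P v i =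
      if h : d v ≤ d i ∧ parent^[d i - d v] i = v then c i (d i - d v) else 0 := fun v i => rfl
  have hdr : d r = 0 := (hd0 r).2 rfl
  refine ⟨P, ?_, ?_, ?_⟩
  · ext v i
    rw [Matrix.mul_apply, Matrix.mul_diagonal]
    have hsplit : ∀ u : Fin n,
        (Matrix.of fun u v => if u = v then T v else
          if v ≠ r ∧ parent v = u then (1:K) else 0) v u * P u i
        = (if v = u then T u * P u i else 0)
          + (if u ≠ r ∧ parent u = v then P u i else 0) := by
      intro u
      by_cases h1 : v = u
      · have h2 : ¬(u ≠ r ∧ parent u = u) := by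
          rintro ⟨hur, hpu⟩
          have := hpar u hur
          rw [hpu] at this
          omega
        simp [Matrix.of_apply, h1, h2]
      · by_cases h2 : u ≠ r ∧ parent u = v
        · simp [Matrix.of_apply, h1, h2]
        · simp [Matrix.of_apply, h1, h2]
    rw [Finset.sum_congr rfl fun u _ => hsplit u, Finset.sum_add_distrib,
      Finset.sum_ite_eq Finset.univ v (fun u => T u * P u i)]
    simp only [Finset.mem_univ, if_true]
    by_cases hv : d v ≤ d i ∧ parent^[d i - d v] i = v
    · have hPvi : P v i = c i (d i - d v) := dif_pos hv
      set k := d i - d v with hk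
      have hkle : k ≤ d i := Nat.sub_le _ _
      have hdvk : d v + k = d i := by
        have := hanc i k hkle
        rw [hv.2] at this
        omega
      rcases Nat.eq_zero_or_pos k with hk0 | hkpos
      · -- v = i
        have hvi : v = i := by
          have := hv.2
          rw [hk0, Function.iterate_zero_apply] at this
          exact this.symm
        have hS : (∑ u, if u ≠ r ∧ parent u = v then P u i else 0) = 0 := by
          refine Finset.sum_eq_zero fun u _ => ?_
          split_ifs with hu
          · by_contra hne
            have hcond : d u ≤ d i ∧ parent^[d i - d u] i = u := by
              by_contra hcond
              exact hne (dif_neg hcond)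
            have hdu : d u ≠ 0 := fun h => hu.1 ((hd0 u).1 h)
            have hdparu := hpar u hu.1
            rw [hu.2] at hdparu
            omega
          · rfl
        rw [hS, hPvi, hvi]
        ring
      · obtain ⟨m, hm⟩ : ∃ m, k = m + 1 := ⟨k - 1, by omega⟩
        have hu0d : d (parent^[m] i) + m = d i := hanc i m (by omega)
        have hu0r : parent^[m] i ≠ r := by
          intro h
          have := (hd0 _).2 h
          omega
        have hu0p : parent (parent^[m] i) = v := by
          rw [← Function.iterate_succ_apply' parent m i]
          have hmk : m + 1 = k := hm.symm
          rw [Nat.succ_eq_add_one, hmk]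
          exact hv.2
        have hPu0 : P (parent^[m] i) i = c i m := by
          rw [hPapp]
          have hcond : d (parent^[m] i) ≤ d i ∧
              parent^[d i - d (parent^[m] i)] i = parent^[m] i := by
            constructor
            · omega
            · have : d i - d (parent^[m] i) = m := by omega
              rw [this]
          rw [dif_pos hcond]
          congr 1
          omega
        have hS : (∑ u, if u ≠ r ∧ parent u = v then P u i else 0) = c i m := by
          rw [Finset.sum_eq_single (parent^[m] i)]
          · rw [if_pos ⟨hu0r, hu0p⟩, hPu0]
          · intro u _ hne
            split_ifs with hu
            · by_contra hPune
              have hcond : d u ≤ d i ∧ parent^[d i - d u] i = u := by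
                by_contra hcond
                exact hPune (dif_neg hcond)
              have hdu : d u ≠ 0 := fun h => hu.1 ((hd0 u).1 h)
              have hdparu := hpar u hu.1
              rw [hu.2] at hdparu
              -- v = parent^[d i - d u + 1] i
              have hvanc : parent^[d i - d u + 1] i = v := by
                rw [Function.iterate_succ_apply', hcond.2, hu.2]
              have heq : d i - d u + 1 = k := by
                apply hanc_inj i _ _ (by omega) (by omega)
                rw [hvanc, hv.2]
              have hm2 : d i - d u = m := by omega
              have hum : parent^[m] i = u := by rw [← hm2]; exact hcond.2
              exact hne hum.symm
            · rfl
          · intro h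
            exact absurd (Finset.mem_univ _) h
        rw [hS, hPvi, hm]
        have hTv : T i - T v ≠ 0 := by
          have := hTne i (m+1) (by omega) (by omega)
          rwa [← hm, hv.2] at this
        have h2 : c i (m+1) * (T i - T v) = c i m := by
          rw [hcsucc]
          have : parent^[m+1] i = v := by rw [← hm]; exact hv.2
          rw [this, mul_assoc, inv_mul_cancel₀ hTv, mul_one]
        linear_combination -h2
    · have hPvi : P v i = 0 := dif_neg hv
      have hS : (∑ u, if u ≠ r ∧ parent u = v then P u i else 0) = 0 := by
        refine Finset.sum_eq_zero fun u _ => ?_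
        split_ifs with hu
        · by_contra hne
          have hcond : d u ≤ d i ∧ parent^[d i - d u] i = u := by
            by_contra hcond
            exact hne (dif_neg hcond)
          have hdu : d u ≠ 0 := fun h => hu.1 ((hd0 u).1 h)
          have hdparu := hpar u hu.1
          rw [hu.2] at hdparu
          apply hv
          constructor
          · omega
          · have : d i - d v = (d i - d u) + 1 := by omega
            rw [this, Function.iterate_succ_apply', hcond.2, hu.2]
        · rfl
      rw [hS, hPvi]
      ring
  · -- det P = 1
    have hbt : P.BlockTriangular d := by
      intro v i h
      exact dif_neg (by rintro ⟨h1, _⟩; omega)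
    rw [hbt.det]
    refine Finset.prod_eq_one fun k _ => ?_
    have : P.toSquareBlock d k = 1 := by
      ext ⟨v, hv⟩ ⟨i, hi⟩
      simp only [Matrix.toSquareBlock_def, Matrix.of_apply, Matrix.one_apply, Subtype.mk.injEq]
      rw [hPapp]
      by_cases hvi : v = i
      · subst hvi
        rw [dif_pos ⟨le_rfl, by simp⟩]
        simp [hc, cf]
      · rw [dif_neg, if_neg hvi]
        rintro ⟨h1, h2⟩
        have hdd : d v = d i := by rw [hv, hi]
        rw [hdd, Nat.sub_self, Function.iterate_zero_apply] at h2
        exact hvi h2.symm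
    rw [this, Matrix.det_one]
  · intro i
    rw [hPapp, dif_pos ⟨by omega, by rw [hdr, Nat.sub_zero]; exact hancr i⟩]
    exact hcne i _ (by omega)

end HankelAux

namespace HankelAux

theorem sum_odds (m : ℕ) : (∑ i ∈ Finset.range m, ((i : ℕ) + (i + 1))) = m ^ 2 := by
  induction m with
  | zero => simp
  | succ m ih => rw [Finset.sum_range_succ, ih]; ring

/-- abstract core: Hankel determinant of a diagonalizable matrix is nonzero -/
theorem hankel_core {n : ℕ} {K : Type*} [Field K] (r : Fin n) (T' : Fin n → K)
    (hT' : Function.Injective T')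
    (Bl Pl Ql : Matrix (Fin n) (Fin n) K) (Y : Fin n → K)
    (hBP : Bl * Pl = Pl * Matrix.diagonal T')
    (hPlQl : Pl * Ql = 1)
    (hPldet : Pl.det = 1)
    (hPlr : ∀ i, Pl r i ≠ 0)
    (hz : ∀ i, (Ql *ᵥ Y) i ≠ 0) :
    (Matrix.of fun a b : Fin n => ((Bl ^ ((a : ℕ) + (b : ℕ))) *ᵥ Y) r).det ≠ 0 := by
  classical
  set z : Fin n → K := Ql *ᵥ Y with hzdef
  have hY : Pl *ᵥ z = Y := by
    rw [hzdef, Matrix.mulVec_mulVec, hPlQl, Matrix.one_mulVec]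
  have hBlPk : ∀ k : ℕ, Bl ^ k * Pl = Pl * (Matrix.diagonal T') ^ k := by
    intro k
    induction k with
    | zero => simp
    | succ k ih =>
      rw [pow_succ, mul_assoc, hBP, ← mul_assoc, ih, mul_assoc, ← pow_succ]
  set O : Matrix (Fin n) (Fin n) K :=
    Matrix.of (fun (a : Fin n) v => (Bl ^ (a : ℕ)) r v) with hOdef
  set Cm : Matrix (Fin n) (Fin n) K :=
    Matrix.of (fun v (b : Fin n) => ((Bl ^ (b : ℕ)) *ᵥ Y) v) with hCmdef
  have hOC : (Matrix.of fun a b : Fin n => ((Bl ^ ((a : ℕ) + (b : ℕ))) *ᵥ Y) r) = O * Cm := by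
    ext a b
    rw [Matrix.of_apply, pow_add, ← Matrix.mulVec_mulVec, Matrix.mul_apply]
    simp only [hOdef, hCmdef, Matrix.of_apply, Matrix.mulVec, dotProduct]
  have hOP : O * Pl = (Matrix.vandermonde T')ᵀ * Matrix.diagonal (fun i => Pl r i) := by
    ext a i
    have h1 : (O * Pl) a i = (Bl ^ (a : ℕ) * Pl) r i := by
      rw [Matrix.mul_apply, Matrix.mul_apply]
      rfl
    rw [h1, hBlPk, Matrix.diagonal_pow, Matrix.mul_diagonal, Matrix.mul_diagonal,
      Matrix.transpose_apply, Matrix.vandermonde_apply, Pi.pow_apply]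
    ring
  have hvdm : (Matrix.vandermonde T').det ≠ 0 := by
    rw [Ne, Matrix.det_vandermonde_eq_zero_iff]
    rintro ⟨i, j, h, hne⟩
    exact hne (hT' h)
  have hdetO : O.det ≠ 0 := by
    have h2 : O.det * Pl.det = (Matrix.vandermonde T').det * ∏ i, Pl r i := by
      rw [← Matrix.det_mul, hOP, Matrix.det_mul, Matrix.det_transpose, Matrix.det_diagonal]
    rw [hPldet, mul_one] at h2
    rw [h2]
    exact mul_ne_zero hvdm (Finset.prod_ne_zero_iff.2 fun i _ => hPlr i)
  have hCmfac : Cm = Pl * (Matrix.diagonal z * Matrix.vandermonde T') := by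
    ext v b
    have h1 : Cm v b = ((Pl * Matrix.diagonal (T' ^ (b : ℕ))) *ᵥ z) v := by
      rw [hCmdef, Matrix.of_apply, ← hY, Matrix.mulVec_mulVec, hBlPk, Matrix.diagonal_pow]
    rw [h1, Matrix.mul_apply]
    simp only [Matrix.mulVec, dotProduct, Matrix.mul_diagonal, Matrix.diagonal_mul,
      Matrix.vandermonde_apply, Pi.pow_apply]
    refine Finset.sum_congr rfl fun i _ => ?_
    ring
  have hdetCm : Cm.det ≠ 0 := by
    rw [hCmfac, Matrix.det_mul, Matrix.det_mul, hPldet, one_mul, Matrix.det_diagonal]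
    exact mul_ne_zero (Finset.prod_ne_zero_iff.2 fun i _ => hz i) hvdm
  rw [hOC, Matrix.det_mul]
  exact mul_ne_zero hdetO hdetCm

end HankelAux

set_option maxHeartbeats 2000000 in
set_option synthInstance.maxHeartbeats 1000000 in
theorem hankel_glue {n : ℕ} {F : Type*} [Field F]
    (E : Fin n → Fin n → Prop) [DecidableRel E]
    (hconn : ∀ u v : Fin n, Relation.ReflTransGen E u v)
    (hloop : ∀ v : Fin n, E v v)
    (A : Matrix (Fin n) (Fin n)
      (MvPolynomial ({p : Fin n × Fin n // E p.1 p.2} ⊕ Fin n) F))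
    (hA : ∀ u v : Fin n, A u v =
      if h : E v u then MvPolynomial.X (Sum.inl ⟨(v, u), h⟩) else 0)
    (x : Fin n → MvPolynomial ({p : Fin n × Fin n // E p.1 p.2} ⊕ Fin n) F)
    (hx : ∀ i : Fin n, x i = MvPolynomial.X (Sum.inr i))
    (r : Fin n) :
    (Matrix.det (Matrix.of fun a b : Fin n =>
        ((A ^ ((a : ℕ) + (b : ℕ))) *ᵥ x) r)) ≠ 0 := by
  classical
  obtain ⟨parent, d, hd0, hparE, hpard⟩ := HankelAux.exists_tree E r (fun v => hconn v r)
  set R0 := MvPolynomial (Fin n) F with hR0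
  set K0 := FractionRing R0 with hK0
  set R1 := MvPolynomial (Fin n) K0 with hR1
  set L := FractionRing R1 with hL
  set T : Fin n → K0 := fun i => algebraMap R0 K0 (MvPolynomial.X i) with hTdef
  have hT : Function.Injective T := fun i j h =>
    MvPolynomial.X_injective (IsFractionRing.injective R0 K0 h)
  obtain ⟨P, hPeig, hPdet, hPr⟩ := HankelAux.exists_eigenmatrix T hT r parent d hd0 hpard
  set κ : K0 →+* L := (algebraMap R1 L).comp (MvPolynomial.C) with hκdef
  have hκinj : Function.Injective κ :=
    (IsFractionRing.injective R1 L).comp (MvPolynomial.C_injective _ _)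
  set T' : Fin n → L := fun i => κ (T i) with hT'def
  have hT' : Function.Injective T' := fun i j h => hT (hκinj h)
  set B : Matrix (Fin n) (Fin n) K0 := Matrix.of fun u v =>
    if u = v then T v else if v ≠ r ∧ parent v = u then (1:K0) else 0 with hBdef
  set Bl : Matrix (Fin n) (Fin n) L := B.map κ with hBldef
  set Pl : Matrix (Fin n) (Fin n) L := P.map κ with hPldef
  have hBP : Bl * Pl = Pl * Matrix.diagonal T' := by
    rw [hBldef, hPldef, ← Matrix.map_mul, hPeig, Matrix.map_mul]
    congr 1
    rw [Matrix.diagonal_map (map_zero κ)]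
  -- the homomorphism ψ
  set φF : F →+* L := κ.comp ((algebraMap R0 K0).comp (MvPolynomial.C)) with hφF
  set g : ({p : Fin n × Fin n // E p.1 p.2} ⊕ Fin n) → L := fun s =>
    Sum.rec (fun e => κ (B e.1.2 e.1.1)) (fun i => algebraMap R1 L (MvPolynomial.X i)) s
    with hgdef
  set ψ : MvPolynomial ({p : Fin n × Fin n // E p.1 p.2} ⊕ Fin n) F →+* L :=
    MvPolynomial.eval₂Hom φF g with hψdef
  have hψX : ∀ s, ψ (MvPolynomial.X s) = g s := fun s => MvPolynomial.eval₂Hom_X' _ _ _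
  set Y : Fin n → L := fun i => algebraMap R1 L (MvPolynomial.X i) with hYdef
  have hAmap : A.map ψ = Bl := by
    ext u v
    rw [Matrix.map_apply, hA u v]
    by_cases h : E v u
    · rw [dif_pos h, hψX]
      rfl
    · rw [dif_neg h, map_zero]
      have hB0 : B u v = 0 := by
        show (if u = v then T v else if v ≠ r ∧ parent v = u then (1:K0) else 0) = 0
        split_ifs with h1 h2
        · exact absurd (show E v u by rw [h1]; exact hloop v) h
        · exact absurd (h2.2 ▸ hparE v h2.1) h
        · rfl
      rw [hBldef, Matrix.map_apply, hB0, map_zero]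
  have hxmap : ∀ i, ψ (x i) = Y i := by
    intro i
    rw [hx, hψX]
  have hpowmap : ∀ k : ℕ, (A ^ k).map ψ = Bl ^ k := by
    intro k
    have h := map_pow (RingHom.mapMatrix ψ) A k
    simp only [RingHom.mapMatrix_apply] at h
    rw [h, hAmap]
  have hmulvec : ∀ (M : Matrix (Fin n) (Fin n)
      (MvPolynomial ({p : Fin n × Fin n // E p.1 p.2} ⊕ Fin n) F)) (w : Fin n → _) (j : Fin n),
      ψ ((M *ᵥ w) j) = ((M.map ψ) *ᵥ (fun i => ψ (w i))) j := by
    intro M w j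
    simp [Matrix.mulVec, dotProduct, map_sum]
  have hHmap : (Matrix.of fun a b : Fin n =>
      ((A ^ ((a : ℕ) + (b : ℕ))) *ᵥ x) r).map ψ
      = Matrix.of (fun a b : Fin n => ((Bl ^ ((a : ℕ) + (b : ℕ))) *ᵥ Y) r) := by
    ext a b
    rw [Matrix.map_apply, Matrix.of_apply, Matrix.of_apply, hmulvec, hpowmap]
    have : (fun i => ψ (x i)) = Y := funext hxmap
    rw [this]
  -- invertibility of P
  have hPunit : IsUnit P.det := by rw [hPdet]; exact isUnit_one
  set Q : Matrix (Fin n) (Fin n) K0 := P⁻¹ with hQdef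
  have hPQ : P * Q = 1 := Matrix.mul_nonsing_inv P hPunit
  have hQP : Q * P = 1 := Matrix.nonsing_inv_mul P hPunit
  set Ql : Matrix (Fin n) (Fin n) L := Q.map κ with hQldef
  have hPlQl : Pl * Ql = 1 := by
    rw [hPldef, hQldef, ← Matrix.map_mul, hPQ, Matrix.map_one κ (map_zero κ) (map_one κ)]
  have hPldet : Pl.det = 1 := by
    have h := RingHom.map_det κ P
    rw [RingHom.mapMatrix_apply] at h
    rw [hPldef, ← h, hPdet, _root_.map_one]
  have hz : ∀ i, (Ql *ᵥ Y) i ≠ 0 := by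
    intro i
    obtain ⟨v0, hv0⟩ : ∃ v0, Q i v0 ≠ 0 := by
      by_contra hall
      push_neg at hall
      have h0 : (Q * P) i i = 0 := by
        rw [Matrix.mul_apply]
        exact Finset.sum_eq_zero fun v _ => by rw [hall v, zero_mul]
      rw [hQP, Matrix.one_apply_eq] at h0
      exact one_ne_zero h0
    have hzi : (Ql *ᵥ Y) i = algebraMap R1 L
        (∑ v, MvPolynomial.C (Q i v) * MvPolynomial.X v) := by
      show (∑ v, Ql i v * Y v) = _
      rw [map_sum]
      refine Finset.sum_congr rfl fun v _ => ?_
      rw [_root_.map_mul]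
      rfl
    rw [hzi]
    intro h0
    have hq0 : (∑ v, MvPolynomial.C (Q i v) * MvPolynomial.X v : R1) = 0 :=
      (IsFractionRing.injective R1 L) (by rw [h0, map_zero])
    have hcoeff : MvPolynomial.coeff (Finsupp.single v0 1)
        (∑ v, MvPolynomial.C (Q i v) * MvPolynomial.X v : R1) = Q i v0 := by
      rw [MvPolynomial.coeff_sum, Finset.sum_eq_single v0]
      · rw [MvPolynomial.coeff_C_mul, MvPolynomial.coeff_X, if_pos rfl, mul_one]
      · intro v _ hne
        rw [MvPolynomial.coeff_C_mul, MvPolynomial.coeff_X', if_neg, mul_zero]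
        intro heq
        exact hne ((Finsupp.single_left_inj one_ne_zero).1 heq)
      · exact fun h => absurd (Finset.mem_univ _) h
    rw [hq0, MvPolynomial.coeff_zero] at hcoeff
    exact hv0 hcoeff.symm
  have hPlr : ∀ i, Pl r i ≠ 0 := by
    intro i h
    exact hPr i (hκinj (by rw [map_zero]; exact h))
  have hcore := HankelAux.hankel_core r T' hT' Bl Pl Ql Y hBP hPlQl hPldet hPlr hz
  intro hdet0
  have hmapped : (Matrix.of fun a b : Fin n => ((Bl ^ ((a : ℕ) + (b : ℕ))) *ᵥ Y) r).det = 0 := by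
    rw [← hHmap, ← RingHom.mapMatrix_apply, ← RingHom.map_det, hdet0, map_zero]
  exact hcore hmapped

set_option maxHeartbeats 1000000 in
/-- For a strongly connected digraph `E` with self-loops (`E v u` meaning an edge from
`v` to `u`), view the edge weights `λ_e` and the entries `ξ_i` of the initial state as
free variables of the polynomial ring `R = F[λ, ξ]`.  With `A u v = λ_(v,u)` for edges
and `0` otherwise and `x i = ξ_i`, the determinant of the `n × n` Hankel matrix
`H_n^(r)` with entries `(A^(a+b-2) x)_r` is a nonzero polynomial of total degree at
most `n²`, over any field `F` with at least `n + 1` elements. -/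
theorem hankel_det_ne_zero_totalDegree_le {n : ℕ} {F : Type*} [Field F]
    (hcard : Nonempty (Fin (n + 1) ↪ F))
    (E : Fin n → Fin n → Prop) [DecidableRel E]
    (hconn : ∀ u v : Fin n, Relation.ReflTransGen E u v)
    (hloop : ∀ v : Fin n, E v v)
    (A : Matrix (Fin n) (Fin n)
      (MvPolynomial ({p : Fin n × Fin n // E p.1 p.2} ⊕ Fin n) F))
    (hA : ∀ u v : Fin n, A u v =
      if h : E v u then MvPolynomial.X (Sum.inl ⟨(v, u), h⟩) else 0)
    (x : Fin n → MvPolynomial ({p : Fin n × Fin n // E p.1 p.2} ⊕ Fin n) F)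
    (hx : ∀ i : Fin n, x i = MvPolynomial.X (Sum.inr i))
    (r : Fin n) :
    (Matrix.det (Matrix.of fun a b : Fin n =>
        ((A ^ ((a : ℕ) + (b : ℕ))) *ᵥ x) r)) ≠ 0 ∧
    (Matrix.det (Matrix.of fun a b : Fin n =>
        ((A ^ ((a : ℕ) + (b : ℕ))) *ᵥ x) r)).totalDegree ≤ n ^ 2 := by
  classical
  refine ⟨hankel_glue E hconn hloop A hA x hx r, ?_⟩
  have hdeg : ∀ (k : ℕ) (j : Fin n), ((A ^ k *ᵥ x) j).totalDegree ≤ k + 1 := by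
    intro k
    induction k with
    | zero =>
      intro j
      rw [pow_zero, Matrix.one_mulVec, hx]
      exact le_of_eq (MvPolynomial.totalDegree_X _)
    | succ k ih =>
      intro j
      have hstep : (A ^ (k+1) *ᵥ x) j = ∑ v, A j v * (A ^ k *ᵥ x) v := by
        rw [pow_succ', ← Matrix.mulVec_mulVec]
        rfl
      rw [hstep]
      refine (MvPolynomial.totalDegree_finset_sum _ _).trans (Finset.sup_le fun v _ => ?_)
      refine (MvPolynomial.totalDegree_mul _ _).trans ?_
      have h1 : (A j v).totalDegree ≤ 1 := by
        rw [hA]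
        split_ifs
        · exact le_of_eq (MvPolynomial.totalDegree_X _)
        · simp
      have h2 := ih v
      omega
  have hsgn : ∀ z : ℤ,
      ((z : ℤ) : MvPolynomial ({p : Fin n × Fin n // E p.1 p.2} ⊕ Fin n) F).totalDegree = 0 :=
    fun z => by
      rw [← map_intCast (MvPolynomial.C :
        F →+* MvPolynomial ({p : Fin n × Fin n // E p.1 p.2} ⊕ Fin n) F) z,
        MvPolynomial.totalDegree_C]
  rw [Matrix.det_apply']
  refine (MvPolynomial.totalDegree_finset_sum _ _).trans (Finset.sup_le fun σ _ => ?_)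
  refine (MvPolynomial.totalDegree_mul _ _).trans ?_
  rw [hsgn, zero_add]
  refine (MvPolynomial.totalDegree_finset_prod _ _).trans ?_
  have e2 : (∑ i : Fin n, ((σ i : ℕ) + ((i : ℕ) + 1))) = n ^ 2 := by
    rw [Finset.sum_add_distrib, Equiv.sum_comp σ (fun i : Fin n => (i : ℕ)),
      ← Finset.sum_add_distrib, Fin.sum_univ_eq_sum_range (fun i => i + (i + 1)) n]
    exact HankelAux.sum_odds n
  refine le_trans (Finset.sum_le_sum fun i _ => ?_) (le_of_eq e2)
  have h3 := hdeg ((σ i : ℕ) + (i : ℕ)) r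
  simp only [Matrix.of_apply]
  omega
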